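/- Boundedness of relative convergence speed: if (a_n), (b_n) are increasing computable rational sequences converging to A and B, with A Martin-Löf random, then the sequence (B - b_n)/(A - a_n) is bounded above, i.e., there is a constant C with B - b_n ≤ C(A - a_n) for all n. -/

import Mathlib

open Filter MeasureTheory
open scoped ENNReal

/-- The open rational interval coded by an optional pair of rationals. -/
def intervalOf : Option (ℚ × ℚ) → Set ℝ
  | none => ∅
  | some (p, q) => Set.Ioo (p : ℝ) (q : ℝ)

/-- A Martin-Löf test: a uniformly computable enumeration `W` of rational intervals such
that the `k`-th open set `⋃ i, intervalOf (W k i)` has Lebesgue measure at most `2⁻ᵏ`. -/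
def MLTest (W : ℕ → ℕ → Option (ℚ × ℚ)) : Prop :=
  Computable₂ W ∧ ∀ k, volume (⋃ i, intervalOf (W k i)) ≤ (2 : ℝ≥0∞)⁻¹ ^ k

/-- A real is Martin-Löf random if it is not covered by any Martin-Löf test. -/
def MLRandom (A : ℝ) : Prop :=
  ∀ W : ℕ → ℕ → Option (ℚ × ℚ), MLTest W → ∃ k, A ∉ ⋃ i, intervalOf (W k i)

namespace RBaux

/-! ### ℕ-level coding of ℚ -/

def zpos (c : ℕ) : ℕ := if c % 2 = 0 then c / 2 else 0
def zneg (c : ℕ) : ℕ := if c % 2 = 0 then 0 else c / 2 + 1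
def zmk (p n : ℕ) : ℕ := if n ≤ p then 2 * (p - n) else 2 * (n - p) - 1

abbrev encZ : ℤ → ℕ := @Encodable.encode ℤ _
abbrev E0 : ℚ → ℕ := @Encodable.encode ℚ Rat.instEncodable
abbrev eQ : ℚ → ℕ := @Encodable.encode ℚ (Primcodable.toEncodable)

lemma encZ_ofNat (n : ℕ) : encZ (n : ℤ) = 2 * n := rfl
lemma encZ_negSucc (n : ℕ) : encZ (Int.negSucc n) = 2 * n + 1 := rfl

lemma E0_def (q : ℚ) : E0 q = Nat.pair (encZ q.num) q.den := rfl

lemma eQ_def (q : ℚ) : eQ q =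
    (List.range (E0 q)).countP
      (fun m => @decide (m ∈ Set.range E0) (Encodable.decidableRangeEncode ℚ m)) := rfl

def num' (m : ℕ) : ℤ := (zpos m.unpair.1 : ℤ) - (zneg m.unpair.1 : ℤ)
def den' (m : ℕ) : ℕ := m.unpair.2
def Good (m : ℕ) : Prop := 0 < den' m
noncomputable def R (m : ℕ) : ℚ := (num' m : ℚ) / (den' m : ℚ)

lemma roundtrip1 (c : ℕ) : encZ ((zpos c : ℤ) - (zneg c : ℤ)) = c := by
  rcases Nat.even_or_odd c with h | h
  · have h2 : c % 2 = 0 := Nat.even_iff.1 h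
    have : (zpos c : ℤ) - (zneg c : ℤ) = ((c / 2 : ℕ) : ℤ) := by
      simp [zpos, zneg, h2]
    rw [this, encZ_ofNat]; omega
  · have h2 : c % 2 = 1 := Nat.odd_iff.1 h
    have : (zpos c : ℤ) - (zneg c : ℤ) = Int.negSucc (c / 2) := by
      simp [zpos, zneg, h2, Int.negSucc_eq]
    rw [this, encZ_negSucc]; omega

lemma roundtrip2 (z : ℤ) : (zpos (encZ z) : ℤ) - (zneg (encZ z) : ℤ) = z := by
  cases z with
  | ofNat n =>
      show (zpos (encZ (n:ℤ)) : ℤ) - (zneg (encZ (n:ℤ)) : ℤ) = _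
      rw [encZ_ofNat]
      simp [zpos, zneg, Nat.mul_div_cancel_left, Nat.mul_mod_right]
  | negSucc n =>
      rw [encZ_negSucc]
      have h2 : (2 * n + 1) % 2 = 1 := by omega
      simp [zpos, zneg, h2, Int.negSucc_eq]
      omega

lemma zmk_num (p n : ℕ) :
    (zpos (zmk p n) : ℤ) - (zneg (zmk p n) : ℤ) = (p : ℤ) - (n : ℤ) := by
  unfold zmk zpos zneg
  split_ifs <;> push_cast <;> omega

lemma num'_E0 (q : ℚ) : num' (E0 q) = q.num := by
  simp [num', E0_def, Nat.unpair_pair, roundtrip2]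

lemma den'_E0 (q : ℚ) : den' (E0 q) = q.den := by
  simp [den', E0_def, Nat.unpair_pair]

lemma good_E0 (q : ℚ) : Good (E0 q) := by
  simp [Good, den'_E0]; exact q.pos

lemma R_E0 (q : ℚ) : R (E0 q) = q := by
  simp [R, num'_E0, den'_E0, Rat.num_div_den]

/-! ### gcd, range membership, rank -/

def gcdN (x y : ℕ) : ℕ := Nat.findGreatest (fun d => x % d = 0 ∧ y % d = 0 ∧ 0 < x + y) (x + y)

lemma dvd_iff_mod (d x : ℕ) : d ∣ x ↔ x % d = 0 :=
  ⟨Nat.mod_eq_zero_of_dvd, Nat.dvd_of_mod_eq_zero⟩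

lemma gcdN_eq (x y : ℕ) : gcdN x y = Nat.gcd x y := by
  unfold gcdN
  rcases Nat.eq_zero_or_pos (x + y) with h | h
  · have hx : x = 0 := by omega
    have hy : y = 0 := by omega
    subst hx; subst hy; simp
  · rw [Nat.findGreatest_eq_iff]
    have hg : 0 < Nat.gcd x y := by
      rcases Nat.eq_zero_or_pos x with hx | hx
      · subst hx; simpa using (by omega : 0 < y)
      · exact Nat.gcd_pos_of_pos_left _ hx
    refine ⟨?_, fun _ => ⟨?_, ?_, h⟩, fun n hn hn' hP => ?_⟩
    · rcases Nat.eq_zero_or_pos x with hx | hx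
      · subst hx; simp only [Nat.gcd_zero_left]; omega
      · have := Nat.le_of_dvd hx (Nat.gcd_dvd_left x y); omega
    · exact Nat.mod_eq_zero_of_dvd (Nat.gcd_dvd_left x y)
    · exact Nat.mod_eq_zero_of_dvd (Nat.gcd_dvd_right x y)
    · have h1 : n ∣ x := Nat.dvd_of_mod_eq_zero hP.1
      have h2 : n ∣ y := Nat.dvd_of_mod_eq_zero hP.2.1
      have := Nat.le_of_dvd hg (Nat.dvd_gcd h1 h2)
      omega

def inR (m : ℕ) : Bool :=
  decide (0 < m.unpair.2) &&
    (gcdN (zpos m.unpair.1 + zneg m.unpair.1) m.unpair.2 == 1)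

lemma natAbs_num' (m : ℕ) : (num' m).natAbs = zpos m.unpair.1 + zneg m.unpair.1 := by
  unfold num' zpos zneg
  split_ifs <;> simp <;> omega

lemma inR_spec (m : ℕ) : inR m = true ↔ m ∈ Set.range E0 := by
  constructor
  · intro h
    unfold inR at h
    rw [Bool.and_eq_true, beq_iff_eq, decide_eq_true_eq] at h
    obtain ⟨hd, hg⟩ := h
    rw [gcdN_eq, ← natAbs_num'] at hg
    refine ⟨Rat.mk' (num' m) m.unpair.2 (by omega) hg, ?_⟩
    have hnum : (Rat.mk' (num' m) m.unpair.2 (by omega) hg).num = num' m := rfl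
    have hden : (Rat.mk' (num' m) m.unpair.2 (by omega) hg).den = m.unpair.2 := rfl
    rw [E0_def, hnum, hden]
    unfold num'
    rw [roundtrip1, Nat.pair_unpair]
  · rintro ⟨q, rfl⟩
    unfold inR
    rw [Bool.and_eq_true, beq_iff_eq, decide_eq_true_eq]
    constructor
    · rw [E0_def, Nat.unpair_pair]; exact q.pos
    · have h1 : zpos (E0 q).unpair.1 + zneg (E0 q).unpair.1 = q.num.natAbs := by
        rw [← natAbs_num', num'_E0]
      rw [gcdN_eq, h1, E0_def, Nat.unpair_pair]
      exact q.reduced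

lemma inR_eq_decide (m : ℕ) :
    inR m = @decide (m ∈ Set.range E0) (Encodable.decidableRangeEncode ℚ m) := by
  by_cases h : m ∈ Set.range E0
  · simp [h, (inR_spec m).2 h]
  · have : ¬ inR m = true := fun hh => h ((inR_spec m).1 hh)
    simp [h, Bool.not_eq_true] at this ⊢
    exact this

def rank (m : ℕ) : ℕ := (List.range m).countP inR

lemma KEY1 (q : ℚ) : eQ q = rank (E0 q) := by
  rw [eQ_def, rank]
  congr 1
  funext m
  exact (inR_eq_decide m).symm

lemma rank_succ (y : ℕ) : rank (y + 1) = rank y + (if inR y then 1 else 0) := by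
  unfold rank
  rw [List.range_succ, List.countP_append]
  rcases Bool.eq_false_or_eq_true (inR y) with h | h <;>
    simp [List.countP_cons, h]

lemma rank_mono : Monotone rank := by
  refine monotone_nat_of_le_succ ?_
  intro n
  rw [rank_succ]
  omega

lemma rank_lt {y m : ℕ} (hy : inR y = true) (h : y < m) : rank y < rank m := by
  have h1 : rank (y + 1) = rank y + 1 := by rw [rank_succ, hy]; simp
  have := rank_mono (show y + 1 ≤ m by omega)
  omega

/-! ### bounded search -/

def lsearch (B : ℕ) (P : ℕ → Bool) : ℕ :=
  (List.range B).foldr (fun x acc => if P x then x else acc) 0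

lemma foldr_search (P : ℕ → Bool) (l : List ℕ) (d : ℕ) :
    (l.foldr (fun x acc => if P x then x else acc) d = d ∧ ∀ x ∈ l, P x = false) ∨
    ((l.foldr (fun x acc => if P x then x else acc) d) ∈ l ∧
      P (l.foldr (fun x acc => if P x then x else acc) d) = true) := by
  induction l with
  | nil => left; simp
  | cons a l ih =>
      by_cases h : P a = true
      · right; simp [List.foldr_cons, h]
      · simp only [List.foldr_cons, if_neg h]
        rcases ih with ⟨h1, h2⟩ | ⟨h1, h2⟩
        · left
          exact ⟨h1, by
            intro x hx
            rcases List.mem_cons.1 hx with rfl | hx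
            · simpa using h
            · exact h2 x hx⟩
        · right; exact ⟨List.mem_cons_of_mem _ h1, h2⟩

lemma lsearch_spec {B : ℕ} {P : ℕ → Bool} (h : ∃ x, x < B ∧ P x = true) :
    P (lsearch B P) = true ∧ lsearch B P < B := by
  obtain ⟨x, hxB, hx⟩ := h
  rcases foldr_search P (List.range B) 0 with ⟨_, h2⟩ | ⟨h1, h2⟩
  · exact absurd hx (by simpa using h2 x (List.mem_range.2 hxB))
  · exact ⟨h2, List.mem_range.1 h1⟩

/-! ### toRaw -/

def natE (j : ℕ) : ℕ := Nat.pair (2 * j) 1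

lemma pair_le_pair {a a' b b' : ℕ} (ha : a ≤ a') (hb : b ≤ b') :
    Nat.pair a b ≤ Nat.pair a' b' := by
  unfold Nat.pair
  split_ifs <;> nlinarith

lemma natE_lt_succ (j : ℕ) : natE j < natE (j + 1) := by
  unfold natE Nat.pair
  split_ifs <;> nlinarith

lemma E0_natCast (j : ℕ) : E0 ((j : ℚ)) = natE j := by
  rw [E0_def, natE, Rat.num_natCast, Rat.den_natCast, encZ_ofNat]

lemma inR_natE (j : ℕ) : inR (natE j) = true :=
  (inR_spec _).2 ⟨(j : ℚ), E0_natCast j⟩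

lemma rank_natE (j : ℕ) : j ≤ rank (natE j) := by
  induction j with
  | zero => omega
  | succ j ih =>
      have := rank_lt (inR_natE j) (natE_lt_succ j)
      omega

lemma E0_le_natE (q : ℚ) : E0 q ≤ natE (eQ q) := by
  by_contra h
  have hlt : natE (eQ q) < E0 q := by omega
  have h1 := rank_lt (inR_natE (eQ q)) hlt
  have h2 := rank_natE (eQ q)
  rw [← KEY1] at h1
  omega

def toRaw (n : ℕ) : ℕ := lsearch (natE n + 1) (fun m => inR m && (rank m == n))

lemma toRaw_spec (q : ℚ) : toRaw (eQ q) = E0 q := by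
  have hex : ∃ x, x < natE (eQ q) + 1 ∧ (inR x && (rank x == eQ q)) = true := by
    refine ⟨E0 q, by have := E0_le_natE q; omega, ?_⟩
    rw [Bool.and_eq_true, beq_iff_eq]
    exact ⟨(inR_spec _).2 ⟨q, rfl⟩, (KEY1 q).symm⟩
  obtain ⟨hP, _⟩ := lsearch_spec hex
  rw [Bool.and_eq_true, beq_iff_eq] at hP
  obtain ⟨hin, hrk⟩ := hP
  obtain ⟨q', hq'⟩ := (inR_spec _).1 hin
  show lsearch _ _ = E0 q
  rw [← hq'] at hrk ⊢
  rw [← KEY1] at hrk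
  rw [@Encodable.encode_injective ℚ (Primcodable.toEncodable) _ _ hrk]

/-! ### raw arithmetic on codes -/

def rawAdd (m₁ m₂ : ℕ) : ℕ :=
  Nat.pair
    (zmk (zpos m₁.unpair.1 * m₂.unpair.2 + zpos m₂.unpair.1 * m₁.unpair.2)
         (zneg m₁.unpair.1 * m₂.unpair.2 + zneg m₂.unpair.1 * m₁.unpair.2))
    (m₁.unpair.2 * m₂.unpair.2)

def rawMul (m₁ m₂ : ℕ) : ℕ :=
  Nat.pair
    (zmk (zpos m₁.unpair.1 * zpos m₂.unpair.1 + zneg m₁.unpair.1 * zneg m₂.unpair.1)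
         (zpos m₁.unpair.1 * zneg m₂.unpair.1 + zneg m₁.unpair.1 * zpos m₂.unpair.1))
    (m₁.unpair.2 * m₂.unpair.2)

def rawNeg (m : ℕ) : ℕ := Nat.pair (zmk (zneg m.unpair.1) (zpos m.unpair.1)) m.unpair.2

def rawInv (m : ℕ) : ℕ :=
  if zpos m.unpair.1 = 0 ∧ zneg m.unpair.1 = 0 then Nat.pair 0 1
  else if zneg m.unpair.1 = 0 then Nat.pair (zmk m.unpair.2 0) (zpos m.unpair.1)
  else Nat.pair (zmk 0 m.unpair.2) (zneg m.unpair.1)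

def rawLe (m₁ m₂ : ℕ) : Bool :=
  decide (zpos m₁.unpair.1 * m₂.unpair.2 + zneg m₂.unpair.1 * m₁.unpair.2 ≤
          zpos m₂.unpair.1 * m₁.unpair.2 + zneg m₁.unpair.1 * m₂.unpair.2)

lemma num'_pair (c d : ℕ) : num' (Nat.pair c d) = (zpos c : ℤ) - zneg c := by
  simp [num', Nat.unpair_pair]

lemma den'_pair (c d : ℕ) : den' (Nat.pair c d) = d := by
  simp [den', Nat.unpair_pair]

lemma num'_eq (m : ℕ) : num' m = (zpos m.unpair.1 : ℤ) - zneg m.unpair.1 := rfl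

lemma good_rawAdd {m₁ m₂ : ℕ} (h₁ : Good m₁) (h₂ : Good m₂) : Good (rawAdd m₁ m₂) := by
  unfold Good den' at *
  rw [rawAdd, Nat.unpair_pair]
  exact Nat.mul_pos h₁ h₂

lemma good_rawMul {m₁ m₂ : ℕ} (h₁ : Good m₁) (h₂ : Good m₂) : Good (rawMul m₁ m₂) := by
  unfold Good den' at *
  rw [rawMul, Nat.unpair_pair]
  exact Nat.mul_pos h₁ h₂

lemma good_rawNeg {m : ℕ} (h : Good m) : Good (rawNeg m) := by
  unfold Good den' at *
  rw [rawNeg, Nat.unpair_pair]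
  exact h

lemma R_rawAdd {m₁ m₂ : ℕ} (h₁ : Good m₁) (h₂ : Good m₂) :
    R (rawAdd m₁ m₂) = R m₁ + R m₂ := by
  unfold Good den' at h₁ h₂
  have hnum : num' (rawAdd m₁ m₂) = num' m₁ * m₂.unpair.2 + num' m₂ * m₁.unpair.2 := by
    rw [rawAdd, num'_pair, zmk_num, num'_eq, num'_eq]
    push_cast
    ring
  have hden : ((Nat.unpair (rawAdd m₁ m₂)).2 : ℚ) = (m₁.unpair.2 : ℚ) * m₂.unpair.2 := by
    rw [rawAdd, Nat.unpair_pair]; push_cast; ring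
  unfold R den'
  rw [hnum, hden]
  have e₁ : ((m₁.unpair.2 : ℚ)) ≠ 0 := by positivity
  have e₂ : ((m₂.unpair.2 : ℚ)) ≠ 0 := by positivity
  push_cast
  field_simp

lemma R_rawMul {m₁ m₂ : ℕ} (h₁ : Good m₁) (h₂ : Good m₂) :
    R (rawMul m₁ m₂) = R m₁ * R m₂ := by
  unfold Good den' at h₁ h₂
  have hnum : num' (rawMul m₁ m₂) = num' m₁ * num' m₂ := by
    rw [rawMul, num'_pair, zmk_num, num'_eq, num'_eq]
    push_cast
    ring
  have hden : ((Nat.unpair (rawMul m₁ m₂)).2 : ℚ) = (m₁.unpair.2 : ℚ) * m₂.unpair.2 := by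
    rw [rawMul, Nat.unpair_pair]; push_cast; ring
  unfold R den'
  rw [hnum, hden]
  push_cast
  ring

lemma R_rawNeg (m : ℕ) : R (rawNeg m) = - R m := by
  have hnum : num' (rawNeg m) = - num' m := by
    rw [rawNeg, num'_pair, zmk_num, num'_eq]
    ring
  have hden : (Nat.unpair (rawNeg m)).2 = m.unpair.2 := by
    rw [rawNeg, Nat.unpair_pair]
  unfold R den'
  rw [hnum, hden]
  push_cast
  ring

lemma zpos_zneg (c : ℕ) : zpos c = 0 ∨ zneg c = 0 := by
  unfold zpos zneg; split_ifs <;> simp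

lemma good_rawInv {m : ℕ} (h : Good m) (hnz : num' m ≠ 0) : Good (rawInv m) := by
  unfold Good den' at *
  have hc := zpos_zneg m.unpair.1
  rw [num'_eq] at hnz
  unfold rawInv
  split_ifs with h1 h2
  · omega
  · rw [Nat.unpair_pair]; omega
  · rw [Nat.unpair_pair]; omega

lemma R_rawInv {m : ℕ} (h : Good m) : R (rawInv m) = (R m)⁻¹ := by
  unfold Good den' at h
  have hc := zpos_zneg m.unpair.1
  unfold rawInv
  split_ifs with h1 h2
  · have : num' m = 0 := by rw [num'_eq]; omega
    unfold R
    rw [this, num'_pair]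
    norm_num [zpos, zneg]
  · -- num' m = zpos > 0
    have hp : 0 < zpos m.unpair.1 := by omega
    have hnum : num' m = (zpos m.unpair.1 : ℤ) := by rw [num'_eq]; omega
    unfold R
    rw [num'_pair, zmk_num, hnum, den'_pair]
    unfold den'
    rw [eq_comm, inv_eq_iff_eq_inv, eq_comm]
    have e1 : ((zpos m.unpair.1 : ℤ) : ℚ) ≠ 0 := by
      push_cast; positivity
    have e2 : ((m.unpair.2 : ℕ) : ℚ) ≠ 0 := by positivity
    push_cast
    field_simp
    simp
  · -- num' m = - zneg < 0
    have hn : 0 < zneg m.unpair.1 := by omega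
    have hnum : num' m = - (zneg m.unpair.1 : ℤ) := by rw [num'_eq]; omega
    unfold R
    rw [num'_pair, zmk_num, hnum, den'_pair]
    unfold den'
    rw [eq_comm, inv_eq_iff_eq_inv, eq_comm]
    have e1 : ((zneg m.unpair.1 : ℕ) : ℚ) ≠ 0 := by positivity
    have e2 : ((m.unpair.2 : ℕ) : ℚ) ≠ 0 := by positivity
    push_cast
    rw [inv_div, zero_sub, div_neg, neg_div]

lemma rawLe_spec {m₁ m₂ : ℕ} (h₁ : Good m₁) (h₂ : Good m₂) :
    rawLe m₁ m₂ = decide (R m₁ ≤ R m₂) := by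
  unfold Good den' at h₁ h₂
  have key : (R m₁ ≤ R m₂) ↔
      (zpos m₁.unpair.1 * m₂.unpair.2 + zneg m₂.unpair.1 * m₁.unpair.2 ≤
       zpos m₂.unpair.1 * m₁.unpair.2 + zneg m₁.unpair.1 * m₂.unpair.2) := by
    unfold R den'
    rw [div_le_div_iff₀ (by positivity) (by positivity)]
    rw [num'_eq, num'_eq]
    push_cast
    constructor
    · intro hh
      have hQ : ((zpos (Nat.unpair m₁).1 : ℚ) * (Nat.unpair m₂).2 +
          (zneg (Nat.unpair m₂).1 : ℚ) * (Nat.unpair m₁).2 ≤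
          (zpos (Nat.unpair m₂).1 : ℚ) * (Nat.unpair m₁).2 +
          (zneg (Nat.unpair m₁).1 : ℚ) * (Nat.unpair m₂).2) := by nlinarith [hh]
      exact_mod_cast hQ
    · intro hh
      have hQ : ((zpos (Nat.unpair m₁).1 : ℚ) * (Nat.unpair m₂).2 +
          (zneg (Nat.unpair m₂).1 : ℚ) * (Nat.unpair m₁).2 ≤
          (zpos (Nat.unpair m₂).1 : ℚ) * (Nat.unpair m₁).2 +
          (zneg (Nat.unpair m₁).1 : ℚ) * (Nat.unpair m₂).2) := by exact_mod_cast hh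
      nlinarith [hQ]
  unfold rawLe
  by_cases h : R m₁ ≤ R m₂
  · simp [h, key.1 h]
  · have := (not_iff_not.2 key).1 h
    simp [h, this]

/-! ### minimality of the reduced code -/

lemma encZ_eq (z : ℤ) : encZ z = if 0 ≤ z then 2 * z.natAbs else 2 * z.natAbs - 1 := by
  cases z with
  | ofNat n =>
      have h0 : Int.ofNat n = (n : ℤ) := rfl
      rw [h0, encZ_ofNat]
      simp
  | negSucc n => rw [encZ_negSucc]; simp [Int.natAbs_negSucc]; omega

lemma encZ_le_mul (w : ℤ) (k : ℕ) (hk : 1 ≤ k) : encZ w ≤ encZ (w * k) := by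
  rw [encZ_eq, encZ_eq]
  have habs : (w * k).natAbs = w.natAbs * k := by
    rw [Int.natAbs_mul, Int.natAbs_natCast]
  have h2 : w.natAbs * 1 ≤ w.natAbs * k := Nat.mul_le_mul_left _ hk
  rcases le_or_gt 0 w with hw | hw
  · have hwk : 0 ≤ w * k := by positivity
    rw [if_pos hw, if_pos hwk]
    omega
  · have hwk : w * k < 0 := by
      apply mul_neg_of_neg_of_pos hw
      exact_mod_cast hk
    rw [if_neg (by omega), if_neg (by omega)]
    omega

lemma E0_le {m : ℕ} (h : Good m) : E0 (R m) ≤ m := by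
  unfold Good den' at h
  set q := R m with hq
  set z := num' m with hz
  set d := m.unpair.2 with hd
  -- q.den divides d
  have hqd : q = Rat.divInt z d := by
    rw [hq, Rat.divInt_eq_div]
    unfold R den'
    push_cast
    rfl
  have hdvd : (q.den : ℤ) ∣ (d : ℤ) := by
    rw [hqd]; exact Rat.den_dvd z d
  have hdvd' : q.den ∣ d := Int.ofNat_dvd.1 hdvd
  obtain ⟨k, hk⟩ := hdvd'
  have hk1 : 1 ≤ k := by
    rcases Nat.eq_zero_or_pos k with rfl | hpos
    · omega
    · omega
  -- z = q.num * k
  have hden0 : ((q.den : ℕ) : ℚ) ≠ 0 := by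
    have := q.pos; positivity
  have hd0 : ((d : ℕ) : ℚ) ≠ 0 := by positivity
  have hcross : (q.num : ℚ) * d = (z : ℚ) * q.den := by
    have h1 : (q.num : ℚ) / q.den = (z : ℚ) / d := by
      rw [Rat.num_div_den]
      unfold q
      unfold R den'
      rw [← hz, ← hd]
    field_simp at h1
    linarith [h1]
  have hcrossZ : q.num * (d : ℤ) = z * q.den := by exact_mod_cast hcross
  have hzk : z = q.num * k := by
    have : q.num * ((q.den : ℤ) * k) = z * q.den := by
      rw [← hcrossZ]; congr 1; exact_mod_cast hk.symm
    have hqden : (q.den : ℤ) ≠ 0 := by exact_mod_cast q.den_nz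
    have h2 : q.num * k * q.den = z * q.den := by linarith [this]
    exact (mul_right_cancel₀ hqden h2).symm
  -- conclude
  have hc : m.unpair.1 = encZ z := by
    rw [hz, num'_eq, roundtrip1]
  have h1 : encZ q.num ≤ encZ z := by
    rw [hzk]; exact encZ_le_mul q.num k hk1
  calc E0 q = Nat.pair (encZ q.num) q.den := E0_def q
    _ ≤ Nat.pair m.unpair.1 m.unpair.2 := by
        apply pair_le_pair
        · rw [hc]; exact h1
        · rw [← hd, hk]; exact Nat.le_mul_of_pos_right _ (by omega)
    _ = m := Nat.pair_unpair m

/-! ### normalize -/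

def rawEq (y m : ℕ) : Bool := rawLe y m && rawLe m y

def normalize (m : ℕ) : ℕ := lsearch (m + 1) (fun y => inR y && rawEq y m)

lemma normalize_spec {m : ℕ} (h : Good m) : normalize m = E0 (R m) := by
  have hgood : Good (E0 (R m)) := good_E0 _
  have hex : ∃ x, x < m + 1 ∧ (inR x && rawEq x (m : ℕ)) = true := by
    refine ⟨E0 (R m), by have := E0_le h; omega, ?_⟩
    rw [Bool.and_eq_true]
    refine ⟨(inR_spec _).2 ⟨R m, rfl⟩, ?_⟩
    rw [rawEq, Bool.and_eq_true, rawLe_spec hgood h, rawLe_spec h hgood, R_E0]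
    simp
  obtain ⟨hP, _⟩ := lsearch_spec hex
  rw [Bool.and_eq_true] at hP
  obtain ⟨hin, heq⟩ := hP
  obtain ⟨q', hq'⟩ := (inR_spec _).1 hin
  rw [rawEq, Bool.and_eq_true] at heq
  have g' : Good (lsearch (m + 1) fun y => inR y && rawEq y m) := by
    rw [← hq']; exact good_E0 q'
  rw [rawLe_spec g' h, rawLe_spec h g', decide_eq_true_eq, decide_eq_true_eq] at heq
  have hRR : R (lsearch (m + 1) fun y => inR y && rawEq y m) = R m :=
    le_antisymm heq.1 heq.2
  show lsearch _ _ = _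
  rw [← hq'] at hRR ⊢
  rw [R_E0] at hRR
  rw [hRR]

/-! ### Primrec facts -/

open Primrec in
lemma pr_zpos : Primrec zpos := by
  unfold zpos
  exact Primrec.ite
    (PrimrecRel.comp Primrec.eq (nat_mod.comp .id (const 2)) (const 0))
    (nat_div.comp .id (const 2)) (const 0)

open Primrec in
lemma pr_zneg : Primrec zneg := by
  unfold zneg
  exact Primrec.ite
    (PrimrecRel.comp Primrec.eq (nat_mod.comp .id (const 2)) (const 0))
    (const 0) (Primrec.succ.comp (nat_div.comp .id (const 2)))

open Primrec in
lemma pr_zmk : Primrec₂ zmk := by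
  unfold zmk
  exact Primrec₂.mk <| Primrec.ite
    (PrimrecRel.comp nat_le snd fst)
    (nat_mul.comp (const 2) (nat_sub.comp fst snd))
    (nat_sub.comp (nat_mul.comp (const 2) (nat_sub.comp snd fst)) (const 1))

open Primrec in
lemma pr_gcdN : Primrec₂ gcdN := by
  unfold gcdN
  apply Primrec₂.mk
  have h := Primrec.nat_findGreatest
    (f := fun x : ℕ × ℕ => x.1 + x.2)
    (p := fun (x : ℕ × ℕ) (d : ℕ) => x.1 % d = 0 ∧ x.2 % d = 0 ∧ 0 < x.1 + x.2)
    (nat_add.comp fst snd)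
    ?_
  · exact h.of_eq fun x => rfl
  · have h1 : Primrec fun y : (ℕ × ℕ) × ℕ => decide (y.1.1 % y.2 = 0) :=
      (PrimrecRel.comp Primrec.eq (nat_mod.comp (fst.comp fst) snd) (const 0)).decide
    have h2 : Primrec fun y : (ℕ × ℕ) × ℕ => decide (y.1.2 % y.2 = 0) :=
      (PrimrecRel.comp Primrec.eq (nat_mod.comp (snd.comp fst) snd) (const 0)).decide
    have h3 : Primrec fun y : (ℕ × ℕ) × ℕ => decide (0 < y.1.1 + y.1.2) :=
      (PrimrecRel.comp nat_lt (const 0) (nat_add.comp (fst.comp fst) (snd.comp fst))).decide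
    have hand : Primrec fun y : (ℕ × ℕ) × ℕ =>
        (decide (y.1.1 % y.2 = 0) && (decide (y.1.2 % y.2 = 0) && decide (0 < y.1.1 + y.1.2))) :=
      Primrec.and.comp h1 (Primrec.and.comp h2 h3)
    refine Primrec₂.primrecRel (Primrec₂.mk (hand.of_eq ?_))
    intro y
    simp [Bool.decide_and]

open Primrec in
lemma pr_unpair1 : Primrec (fun m : ℕ => m.unpair.1) := fst.comp Primrec.unpair
open Primrec in
lemma pr_unpair2 : Primrec (fun m : ℕ => m.unpair.2) := snd.comp Primrec.unpair

open Primrec in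
lemma pr_inR : Primrec inR := by
  unfold inR
  apply Primrec.and.comp
  · exact (PrimrecRel.comp nat_lt (const 0) pr_unpair2).decide
  · exact Primrec.beq.comp
      (pr_gcdN.comp (nat_add.comp (pr_zpos.comp pr_unpair1) (pr_zneg.comp pr_unpair1))
        pr_unpair2)
      (const 1)

lemma countP_foldr (P : ℕ → Bool) (l : List ℕ) :
    l.foldr (fun x acc => if P x then acc + 1 else acc) 0 = l.countP P := by
  induction l with
  | nil => simp
  | cons a l ih => by_cases h : P a <;> simp [List.countP_cons, h, ih] <;> omega

open Primrec in
lemma pr_rank : Primrec rank := by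
  have h := Primrec.list_foldr (f := fun m : ℕ => List.range m) (g := fun _ : ℕ => 0)
    (h := fun (_ : ℕ) (p : ℕ × ℕ) => if inR p.1 then p.2 + 1 else p.2)
    (list_range.comp .id) (const 0) ?_
  · exact h.of_eq fun m => by rw [rank, ← countP_foldr inR]
  · apply Primrec₂.mk
    apply Primrec.ite
    · exact PrimrecRel.comp Primrec.eq (pr_inR.comp (fst.comp snd)) (const true)
    · exact Primrec.succ.comp (snd.comp snd)
    · exact snd.comp snd

open Primrec in
lemma pr_natE : Primrec natE := by
  unfold natE
  exact Primrec₂.natPair.comp (nat_mul.comp (const 2) .id) (const 1)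

open Primrec in
lemma pr_toRaw : Primrec toRaw := by
  unfold toRaw lsearch
  have h := Primrec.list_foldr (f := fun n : ℕ => List.range (natE n + 1))
    (g := fun _ : ℕ => 0)
    (h := fun (n : ℕ) (p : ℕ × ℕ) => if (inR p.1 && (rank p.1 == n)) then p.1 else p.2)
    (list_range.comp (Primrec.succ.comp pr_natE)) (const 0) ?_
  · exact h.of_eq fun n => rfl
  · apply Primrec₂.mk
    apply Primrec.ite
    · exact PrimrecRel.comp Primrec.eq
        (Primrec.and.comp (pr_inR.comp (fst.comp snd))
          (Primrec.beq.comp (pr_rank.comp (fst.comp snd)) fst)) (const true)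
    · exact fst.comp snd
    · exact snd.comp snd

open Primrec in
lemma pr_rawAdd : Primrec₂ rawAdd := by
  unfold rawAdd
  apply Primrec₂.mk
  have u1 : Primrec (fun p : ℕ × ℕ => p.1.unpair.1) := pr_unpair1.comp fst
  have u2 : Primrec (fun p : ℕ × ℕ => p.2.unpair.1) := pr_unpair1.comp snd
  have d1 : Primrec (fun p : ℕ × ℕ => p.1.unpair.2) := pr_unpair2.comp fst
  have d2 : Primrec (fun p : ℕ × ℕ => p.2.unpair.2) := pr_unpair2.comp snd
  exact Primrec₂.natPair.comp
    (pr_zmk.comp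
      (nat_add.comp (nat_mul.comp (pr_zpos.comp u1) d2) (nat_mul.comp (pr_zpos.comp u2) d1))
      (nat_add.comp (nat_mul.comp (pr_zneg.comp u1) d2) (nat_mul.comp (pr_zneg.comp u2) d1)))
    (nat_mul.comp d1 d2)

open Primrec in
lemma pr_rawMul : Primrec₂ rawMul := by
  unfold rawMul
  apply Primrec₂.mk
  have u1 : Primrec (fun p : ℕ × ℕ => p.1.unpair.1) := pr_unpair1.comp fst
  have u2 : Primrec (fun p : ℕ × ℕ => p.2.unpair.1) := pr_unpair1.comp snd
  have d1 : Primrec (fun p : ℕ × ℕ => p.1.unpair.2) := pr_unpair2.comp fst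
  have d2 : Primrec (fun p : ℕ × ℕ => p.2.unpair.2) := pr_unpair2.comp snd
  exact Primrec₂.natPair.comp
    (pr_zmk.comp
      (nat_add.comp (nat_mul.comp (pr_zpos.comp u1) (pr_zpos.comp u2))
        (nat_mul.comp (pr_zneg.comp u1) (pr_zneg.comp u2)))
      (nat_add.comp (nat_mul.comp (pr_zpos.comp u1) (pr_zneg.comp u2))
        (nat_mul.comp (pr_zneg.comp u1) (pr_zpos.comp u2))))
    (nat_mul.comp d1 d2)

open Primrec in
lemma pr_rawNeg : Primrec rawNeg := by
  unfold rawNeg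
  exact Primrec₂.natPair.comp
    (pr_zmk.comp (pr_zneg.comp pr_unpair1) (pr_zpos.comp pr_unpair1)) pr_unpair2

open Primrec in
lemma pr_rawInv : Primrec rawInv := by
  unfold rawInv
  apply Primrec.ite
  · apply PrimrecPred.and
    · exact PrimrecRel.comp Primrec.eq (pr_zpos.comp pr_unpair1) (const 0)
    · exact PrimrecRel.comp Primrec.eq (pr_zneg.comp pr_unpair1) (const 0)
  · exact const (Nat.pair 0 1)
  · apply Primrec.ite
    · exact PrimrecRel.comp Primrec.eq (pr_zneg.comp pr_unpair1) (const 0)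
    · exact Primrec₂.natPair.comp (pr_zmk.comp pr_unpair2 (const 0)) (pr_zpos.comp pr_unpair1)
    · exact Primrec₂.natPair.comp (pr_zmk.comp (const 0) pr_unpair2) (pr_zneg.comp pr_unpair1)

open Primrec in
lemma pr_rawLe : Primrec₂ rawLe := by
  unfold rawLe
  apply Primrec₂.mk
  have u1 : Primrec (fun p : ℕ × ℕ => p.1.unpair.1) := pr_unpair1.comp fst
  have u2 : Primrec (fun p : ℕ × ℕ => p.2.unpair.1) := pr_unpair1.comp snd
  have d1 : Primrec (fun p : ℕ × ℕ => p.1.unpair.2) := pr_unpair2.comp fst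
  have d2 : Primrec (fun p : ℕ × ℕ => p.2.unpair.2) := pr_unpair2.comp snd
  exact (PrimrecRel.comp nat_le
    (nat_add.comp (nat_mul.comp (pr_zpos.comp u1) d2) (nat_mul.comp (pr_zneg.comp u2) d1))
    (nat_add.comp (nat_mul.comp (pr_zpos.comp u2) d1) (nat_mul.comp (pr_zneg.comp u1) d2))).decide

open Primrec in
lemma pr_rawEq : Primrec₂ rawEq := by
  unfold rawEq
  exact Primrec₂.mk <| Primrec.and.comp
    (pr_rawLe.comp fst snd) (pr_rawLe.comp snd fst)

open Primrec in
lemma pr_normalize : Primrec normalize := by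
  unfold normalize lsearch
  have h := Primrec.list_foldr (f := fun m : ℕ => List.range (m + 1))
    (g := fun _ : ℕ => 0)
    (h := fun (m : ℕ) (p : ℕ × ℕ) => if (inR p.1 && rawEq p.1 m) then p.1 else p.2)
    (list_range.comp Primrec.succ) (const 0) ?_
  · exact h.of_eq fun m => rfl
  · apply Primrec₂.mk
    apply Primrec.ite
    · exact PrimrecRel.comp Primrec.eq
        (Primrec.and.comp (pr_inR.comp (fst.comp snd))
          (pr_rawEq.comp (fst.comp snd) fst)) (const true)
    · exact fst.comp snd
    · exact snd.comp snd

/-! ### ℚ-level primitive recursiveness -/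

lemma good_rawInv' {m : ℕ} (h : Good m) : Good (rawInv m) := by
  by_cases hz : num' m = 0
  · have h0 : zpos m.unpair.1 = 0 ∧ zneg m.unpair.1 = 0 := by
      rcases zpos_zneg m.unpair.1 with h' | h' <;> rw [num'_eq] at hz <;> omega
    unfold Good den' rawInv
    rw [if_pos h0, Nat.unpair_pair]
    omega
  · exact good_rawInv h hz

lemma eQ_add (q₁ q₂ : ℚ) :
    eQ (q₁ + q₂) = rank (normalize (rawAdd (toRaw (eQ q₁)) (toRaw (eQ q₂)))) := by
  rw [toRaw_spec, toRaw_spec]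
  have hg : Good (rawAdd (E0 q₁) (E0 q₂)) := good_rawAdd (good_E0 q₁) (good_E0 q₂)
  rw [normalize_spec hg, R_rawAdd (good_E0 q₁) (good_E0 q₂), R_E0, R_E0, ← KEY1]

lemma eQ_mul (q₁ q₂ : ℚ) :
    eQ (q₁ * q₂) = rank (normalize (rawMul (toRaw (eQ q₁)) (toRaw (eQ q₂)))) := by
  rw [toRaw_spec, toRaw_spec]
  have hg : Good (rawMul (E0 q₁) (E0 q₂)) := good_rawMul (good_E0 q₁) (good_E0 q₂)
  rw [normalize_spec hg, R_rawMul (good_E0 q₁) (good_E0 q₂), R_E0, R_E0, ← KEY1]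

lemma eQ_neg (q : ℚ) : eQ (-q) = rank (normalize (rawNeg (toRaw (eQ q)))) := by
  rw [toRaw_spec]
  have hg : Good (rawNeg (E0 q)) := good_rawNeg (good_E0 q)
  rw [normalize_spec hg, R_rawNeg, R_E0, ← KEY1]

lemma eQ_inv (q : ℚ) : eQ (q⁻¹) = rank (normalize (rawInv (toRaw (eQ q)))) := by
  rw [toRaw_spec]
  have hg : Good (rawInv (E0 q)) := good_rawInv' (good_E0 q)
  rw [normalize_spec hg, R_rawInv (good_E0 q), R_E0, ← KEY1]

lemma eQ_natCast (n : ℕ) : eQ ((n : ℚ)) = rank (natE n) := by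
  rw [KEY1, E0_natCast]

lemma decide_le (q₁ q₂ : ℚ) :
    (decide (q₁ ≤ q₂)) = rawLe (toRaw (eQ q₁)) (toRaw (eQ q₂)) := by
  rw [toRaw_spec, toRaw_spec, rawLe_spec (good_E0 q₁) (good_E0 q₂), R_E0, R_E0]

open Primrec in
lemma pr_encQ : Primrec eQ := Primrec.encode

open Primrec in
lemma prQ_add : Primrec₂ ((· + ·) : ℚ → ℚ → ℚ) := by
  rw [← Primrec₂.encode_iff]
  have h : Primrec₂ fun q₁ q₂ : ℚ =>
      rank (normalize (rawAdd (toRaw (eQ q₁)) (toRaw (eQ q₂)))) :=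
    Primrec₂.mk <| (pr_rank.comp <| pr_normalize.comp <| pr_rawAdd.comp
      (pr_toRaw.comp (pr_encQ.comp fst)) (pr_toRaw.comp (pr_encQ.comp snd)))
  exact h.of_eq fun q₁ q₂ => (eQ_add q₁ q₂).symm

open Primrec in
lemma prQ_mul : Primrec₂ ((· * ·) : ℚ → ℚ → ℚ) := by
  rw [← Primrec₂.encode_iff]
  have h : Primrec₂ fun q₁ q₂ : ℚ =>
      rank (normalize (rawMul (toRaw (eQ q₁)) (toRaw (eQ q₂)))) :=
    Primrec₂.mk <| (pr_rank.comp <| pr_normalize.comp <| pr_rawMul.comp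
      (pr_toRaw.comp (pr_encQ.comp fst)) (pr_toRaw.comp (pr_encQ.comp snd)))
  exact h.of_eq fun q₁ q₂ => (eQ_mul q₁ q₂).symm

open Primrec in
lemma prQ_neg : Primrec (Neg.neg : ℚ → ℚ) := by
  rw [← Primrec.encode_iff]
  have h : Primrec fun q : ℚ => rank (normalize (rawNeg (toRaw (eQ q)))) :=
    pr_rank.comp <| pr_normalize.comp <| pr_rawNeg.comp <| pr_toRaw.comp pr_encQ
  exact h.of_eq fun q => (eQ_neg q).symm

open Primrec in
lemma prQ_inv : Primrec (Inv.inv : ℚ → ℚ) := by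
  rw [← Primrec.encode_iff]
  have h : Primrec fun q : ℚ => rank (normalize (rawInv (toRaw (eQ q)))) :=
    pr_rank.comp <| pr_normalize.comp <| pr_rawInv.comp <| pr_toRaw.comp pr_encQ
  exact h.of_eq fun q => (eQ_inv q).symm

open Primrec in
lemma prQ_natCast : Primrec (fun n : ℕ => (n : ℚ)) := by
  rw [← Primrec.encode_iff]
  have h : Primrec fun n : ℕ => rank (natE n) := pr_rank.comp pr_natE
  exact h.of_eq fun n => (eQ_natCast n).symm

open Primrec in
lemma prQ_sub : Primrec₂ ((· - ·) : ℚ → ℚ → ℚ) := by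
  have h : Primrec₂ fun q₁ q₂ : ℚ => q₁ + (-q₂) :=
    Primrec₂.mk <| prQ_add.comp fst (prQ_neg.comp snd)
  exact h.of_eq fun q₁ q₂ => (sub_eq_add_neg q₁ q₂).symm

open Primrec in
lemma prQ_ledec : Primrec₂ fun q₁ q₂ : ℚ => decide (q₁ ≤ q₂) := by
  have h : Primrec₂ fun q₁ q₂ : ℚ => rawLe (toRaw (eQ q₁)) (toRaw (eQ q₂)) :=
    Primrec₂.mk <| pr_rawLe.comp (pr_toRaw.comp (pr_encQ.comp fst))
      (pr_toRaw.comp (pr_encQ.comp snd))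
  exact h.of_eq fun q₁ q₂ => (decide_le q₁ q₂).symm

/-! ### the adaptive test construction -/

def pfun (a b : ℕ → ℚ) (ε : ℚ) : ℕ → ℕ :=
  fun s => Nat.rec 0
    (fun s' ih => if a ih + ε * b (s' + 1) ≤ a (s' + 1) + ε * b ih then s' + 1 else ih) s

def epsK (K k : ℕ) : ℚ := ((2 ^ (k + K) : ℕ) : ℚ)⁻¹

def WF (a b : ℕ → ℚ) (K : ℕ) (k s : ℕ) : Option (ℚ × ℚ) :=
  if pfun a b (epsK K k) s = s then none
  else some (a (pfun a b (epsK K k) s),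
    a (pfun a b (epsK K k) s) + epsK K k * (b s - b (pfun a b (epsK K k) s)))

open Primrec in
lemma pr_pow2 (K : ℕ) : Primrec (fun k : ℕ => 2 ^ (k + K)) := by
  have hpow : Primrec₂ ((· ^ ·) : ℕ → ℕ → ℕ) := Primrec₂.unpaired'.1 Nat.Primrec.pow
  exact hpow.comp (const 2) (nat_add.comp .id (const K))

open Primrec in
lemma pr_epsK (K : ℕ) : Primrec (epsK K) := by
  unfold epsK
  exact prQ_inv.comp (prQ_natCast.comp (pr_pow2 K))

lemma cond_decide {P : Prop} [Decidable P] {α : Type*} (x y : α) :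
    (bif decide P then x else y) = if P then x else y := by
  by_cases h : P <;> simp [h]

section computable
variable {a b : ℕ → ℚ}

lemma comp_pfun (ha : Computable a) (hb : Computable b) (K : ℕ) :
    Computable₂ (fun k s => pfun a b (epsK K k) s) := by
  apply Computable₂.mk
  have hc : Computable fun p : (ℕ × ℕ) × ℕ × ℕ =>
      decide (a p.2.2 + epsK K p.1.1 * b (p.2.1 + 1) ≤ a (p.2.1 + 1) + epsK K p.1.1 * b p.2.2) := by
    have he : Computable fun p : (ℕ × ℕ) × ℕ × ℕ => epsK K p.1.1 :=
      (pr_epsK K).to_comp.comp (Computable.fst.comp Computable.fst)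
    have hx : Computable fun p : (ℕ × ℕ) × ℕ × ℕ =>
        a p.2.2 + epsK K p.1.1 * b (p.2.1 + 1) :=
      prQ_add.to_comp.comp (ha.comp (Computable.snd.comp Computable.snd))
        (prQ_mul.to_comp.comp he
          (hb.comp (Computable.succ.comp (Computable.fst.comp Computable.snd))))
    have hy : Computable fun p : (ℕ × ℕ) × ℕ × ℕ =>
        a (p.2.1 + 1) + epsK K p.1.1 * b p.2.2 :=
      prQ_add.to_comp.comp (ha.comp (Computable.succ.comp (Computable.fst.comp Computable.snd)))
        (prQ_mul.to_comp.comp he (hb.comp (Computable.snd.comp Computable.snd)))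
    exact prQ_ledec.to_comp.comp hx hy
  have h := Computable.nat_rec (f := fun p : ℕ × ℕ => p.2) (g := fun _ : ℕ × ℕ => 0)
    (h := fun (p : ℕ × ℕ) (q : ℕ × ℕ) =>
      bif decide (a q.2 + epsK K p.1 * b (q.1 + 1) ≤ a (q.1 + 1) + epsK K p.1 * b q.2)
      then q.1 + 1 else q.2)
    Computable.snd (Computable.const 0) ?hh
  case hh =>
    apply Computable₂.mk
    exact Computable.cond hc
      (Computable.succ.comp (Computable.fst.comp Computable.snd))
      (Computable.snd.comp Computable.snd)
  apply h.of_eq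
  rintro ⟨k, s⟩
  show Nat.rec 0 (fun y IH =>
      bif decide (a IH + epsK K k * b (y + 1) ≤ a (y + 1) + epsK K k * b IH)
      then y + 1 else IH) s = pfun a b (epsK K k) s
  unfold pfun
  induction s with
  | zero => rfl
  | succ s ih =>
      have key : ∀ (x y : ℕ), x = y →
          (bif decide (a x + epsK K k * b (s + 1) ≤ a (s + 1) + epsK K k * b x)
            then s + 1 else x) =
          (if a y + epsK K k * b (s + 1) ≤ a (s + 1) + epsK K k * b y then s + 1 else y) := by
        rintro x y rfl
        rw [cond_decide]
      exact key _ _ ih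

lemma comp_WF (ha : Computable a) (hb : Computable b) (K : ℕ) :
    Computable₂ (WF a b K) := by
  apply Computable₂.mk
  have hp : Computable fun p : ℕ × ℕ => pfun a b (epsK K p.1) p.2 := comp_pfun ha hb K
  have hc : Computable fun p : ℕ × ℕ => decide (pfun a b (epsK K p.1) p.2 = p.2) :=
    ((Primrec.eq (α := ℕ)).decide.to_comp).comp hp Computable.snd
  have hsome : Computable fun p : ℕ × ℕ =>
      (some (a (pfun a b (epsK K p.1) p.2),
        a (pfun a b (epsK K p.1) p.2) + epsK K p.1 * (b p.2 - b (pfun a b (epsK K p.1) p.2))) :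
        Option (ℚ × ℚ)) := by
    have he : Computable fun p : ℕ × ℕ => epsK K p.1 :=
      (pr_epsK K).to_comp.comp Computable.fst
    exact Computable.option_some.comp
      ((ha.comp hp).pair
        (prQ_add.to_comp.comp (ha.comp hp)
          (prQ_mul.to_comp.comp he
            (prQ_sub.to_comp.comp (hb.comp Computable.snd) (hb.comp hp)))))
  have h := Computable.cond hc (Computable.const (none : Option (ℚ × ℚ))) hsome
  apply h.of_eq
  intro p
  rw [cond_decide]
  rfl

end computable

/-! ### combinatorial properties of pfun -/

section pprops
variable (a b : ℕ → ℚ) (ε : ℚ)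

local notation "P" => pfun a b ε

lemma psucc (s : ℕ) :
    P (s+1) = if a (P s) + ε * b (s+1) ≤ a (s+1) + ε * b (P s) then s+1 else P s := rfl

lemma p_le (s : ℕ) : P s ≤ s := by
  induction s with
  | zero => exact le_rfl
  | succ s ih => rw [psucc]; split_ifs <;> omega

lemma p_sandwich : ∀ s t, P s ≤ t → t ≤ s → P t = P s := by
  intro s
  induction s with
  | zero => intro t h1 h2; interval_cases t; rfl
  | succ s ih =>
      intro t h1 h2
      by_cases hc : a (P s) + ε * b (s+1) ≤ a (s+1) + ε * b (P s)
      · rw [psucc, if_pos hc] at h1 ⊢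
        have : t = s + 1 := by omega
        rw [this, psucc, if_pos hc]
      · rw [psucc, if_neg hc] at h1 ⊢
        rcases Nat.lt_or_ge t (s+1) with ht | ht
        · exact ih t h1 (by omega)
        · have : t = s + 1 := by omega
          rw [this, psucc, if_neg hc]

lemma p_idem (s : ℕ) : P (P s) = P s :=
  p_sandwich a b ε s (P s) le_rfl (p_le a b ε s)

lemma p_inblock {t : ℕ} (h : P t < t) :
    a t + ε * b (P t) < a (P t) + ε * b t := by
  rcases t with _ | s
  · omega
  · by_cases hc : a (P s) + ε * b (s+1) ≤ a (s+1) + ε * b (P s)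
    · rw [psucc, if_pos hc] at h; omega
    · rw [psucc, if_neg hc] at h ⊢
      push_neg at hc
      linarith

lemma p_trigger {s : ℕ} (h : P (s+1) = s+1) :
    a (P s) + ε * b (s+1) ≤ a (s+1) + ε * b (P s) := by
  by_cases hc : a (P s) + ε * b (s+1) ≤ a (s+1) + ε * b (P s)
  · exact hc
  · rw [psucc, if_neg hc] at h
    have := p_le a b ε s
    omega

lemma p_inblock_le {t : ℕ} (h : P t ≤ t) :
    a t + ε * b (P t) ≤ a (P t) + ε * b t := by
  rcases eq_or_lt_of_le h with heq | hlt
  · rw [heq]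
  · linarith [p_inblock a b ε hlt]

lemma claimH {n : ℕ} : ∀ s, n ≤ s →
    (a n + ε * b (P s) ≤ a (P s) + ε * b n) ∨ P s ≤ n := by
  intro s
  induction s with
  | zero => intro h; right; exact Nat.zero_le n
  | succ s ih =>
      intro hns
      rcases Nat.lt_or_ge n (s+1) with hn | hn
      · -- n ≤ s
        have hns' : n ≤ s := by omega
        by_cases h : P (s+1) = s+1
        · left
          have htr := p_trigger a b ε h
          rw [h]
          rcases ih hns' with hL | hR
          · linarith
          · have hpn : P n = P s := p_sandwich a b ε s n hR hns'
            have hin : a n + ε * b (P s) ≤ a (P s) + ε * b n := by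
              have := p_inblock_le a b ε (t := n) (by rw [hpn]; omega)
              rw [hpn] at this
              exact this
            linarith
        · have hps : P (s+1) = P s := by
            by_cases hc : a (P s) + ε * b (s+1) ≤ a (s+1) + ε * b (P s)
            · rw [psucc, if_pos hc] at h ⊢; omega
            · rw [psucc, if_neg hc]
          rw [hps]
          exact ih hns'
      · -- n = s+1
        right
        have := p_le a b ε (s+1)
        omega

/-- the right endpoint of the current interval -/
def rend (s : ℕ) : ℚ := a (P s) + ε * (b s - b (P s))

lemma rend_ge {n m : ℕ} (h : n ≤ m) :
    a n + ε * (b m - b n) ≤ rend a b ε m := by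
  unfold rend
  rcases claimH a b ε m h with hL | hR
  · linarith
  · have hpn : P n = P m := p_sandwich a b ε m n hR h
    have hin := p_inblock_le a b ε (t := n) (by rw [hpn]; exact hR)
    rw [hpn] at hin
    linarith

lemma rend_sub {t : ℕ} (h : P (t+1) = P t) :
    rend a b ε (t+1) - rend a b ε t = ε * (b (t+1) - b t) := by
  unfold rend
  rw [h]
  ring

lemma rend_pfun (s : ℕ) : rend a b ε (P s) = a (P s) := by
  unfold rend
  rw [p_idem]
  ring

end pprops

/-! ### measure bound -/

open Filter MeasureTheory in
lemma volume_WF (a b : ℕ → ℚ) (hmb : StrictMono b) (B : ℝ)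
    (hB : Tendsto (fun n => (b n : ℝ)) atTop (nhds B))
    (K : ℕ) (hK : B - (b 0 : ℝ) ≤ 2 ^ K) (k : ℕ) :
    volume (⋃ i, intervalOf (WF a b K k i)) ≤ (2 : ℝ≥0∞)⁻¹ ^ k := by
  set ε := epsK K k with hedef
  have hε : (0 : ℚ) < ε := by
    rw [hedef]; unfold epsK; positivity
  set P := pfun a b ε with hPdef
  set r := rend a b ε with hrdef
  have hbB : ∀ n, (b n : ℝ) ≤ B := by
    intro n
    apply ge_of_tendsto hB
    filter_upwards [eventually_ge_atTop n] with m hm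
    exact_mod_cast hmb.monotone hm
  classical
  set seg : ℕ → Set ℝ := fun t =>
    if P (t+1) = P t then Set.Ioc ((r t : ℝ)) ((r (t+1) : ℝ)) else ∅ with hsegdef
  -- chain covering
  have chain : ∀ (i u : ℕ), (∀ j, j ≤ i → P (u + j) = u) →
      Set.Ioc ((r u : ℝ)) ((r (u + i) : ℝ)) ⊆ ⋃ t, seg t := by
    intro i
    induction i with
    | zero => intro u _; simp
    | succ i ih =>
        intro u hu
        intro x hx
        by_cases hxi : x ≤ (r (u + i) : ℝ)
        · exact ih u (fun j hj => hu j (by omega)) ⟨hx.1, hxi⟩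
        · push_neg at hxi
          refine Set.mem_iUnion.2 ⟨u + i, ?_⟩
          have hcond : P (u + i + 1) = P (u + i) := by
            rw [show u + i + 1 = u + (i+1) by ring, hu (i+1) le_rfl, hu i (by omega)]
          rw [hsegdef]
          simp only [if_pos hcond]
          exact ⟨hxi, by rw [show u + i + 1 = u + (i+1) by ring]; exact hx.2⟩
  -- the enumerated intervals are covered by the segments
  have hcover : (⋃ i, intervalOf (WF a b K k i)) ⊆ ⋃ t, seg t := by
    refine Set.iUnion_subset fun s => ?_
    unfold WF
    rw [← hedef, ← hPdef]
    by_cases hs : P s = s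
    · rw [if_pos hs]; simp [intervalOf]
    · rw [if_neg hs]
      have hps : P s ≤ s := p_le a b ε s
      have hlt : P s < s := by omega
      intro x hx
      simp only [intervalOf] at hx
      have hxr : x ∈ Set.Ioc ((r (P s) : ℝ)) ((r s : ℝ)) := by
        have h1 : (r (P s) : ℝ) = ((a (P s) : ℚ) : ℝ) := by
          rw [hrdef, rend_pfun]
        have h2 : ((a (P s) + ε * (b s - b (P s)) : ℚ) : ℝ) = (r s : ℝ) := by
          rw [hrdef]; unfold rend; norm_num; rfl
        constructor
        · rw [h1]; exact hx.1
        · rw [← h2]; exact le_of_lt hx.2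
      have : ∀ j, j ≤ s - P s → P (P s + j) = P s := by
        intro j hj
        exact p_sandwich a b ε s (P s + j) (Nat.le_add_right _ _)
          (show P s + j ≤ s by omega)
      have := chain (s - P s) (P s) this
      rw [show P s + (s - P s) = s by omega] at this
      exact this hxr
  refine le_trans (measure_mono hcover) ?_
  refine le_trans (measure_iUnion_le seg) ?_
  have hbound : ∀ t, volume (seg t) ≤
      ENNReal.ofReal ((ε : ℝ) * ((b (t+1) : ℝ) - (b t : ℝ))) := by
    intro t
    rw [hsegdef]
    by_cases hc : P (t+1) = P t
    · simp only [if_pos hc]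
      rw [Real.volume_Ioc]
      apply ENNReal.ofReal_le_ofReal
      have := rend_sub a b ε hc
      have hcast : (r (t+1) : ℝ) - (r t : ℝ) = ((ε * (b (t+1) - b t) : ℚ) : ℝ) := by
        rw [← this]
        push_cast
        ring
      rw [hcast]
      push_cast
      ring_nf
      exact le_rfl
    · simp [if_neg hc]
  refine le_trans (ENNReal.tsum_le_tsum hbound) ?_
  have htsum : (∑' t, ENNReal.ofReal ((ε : ℝ) * ((b (t+1) : ℝ) - (b t : ℝ)))) ≤
      ENNReal.ofReal ((ε : ℝ) * (B - (b 0 : ℝ))) := by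
    rw [ENNReal.tsum_eq_iSup_sum]
    apply iSup_le
    intro F
    obtain ⟨N, hN⟩ := F.exists_nat_subset_range
    refine le_trans (Finset.sum_le_sum_of_subset hN) ?_
    have hnn : ∀ t, 0 ≤ (ε : ℝ) * ((b (t+1) : ℝ) - (b t : ℝ)) := by
      intro t
      have hb1 : (b t : ℝ) ≤ (b (t+1) : ℝ) := by exact_mod_cast (hmb (Nat.lt_succ_self t)).le
      have : (0:ℝ) ≤ (ε:ℝ) := by exact_mod_cast hε.le
      nlinarith
    rw [← ENNReal.ofReal_sum_of_nonneg (fun t _ => hnn t)]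
    apply ENNReal.ofReal_le_ofReal
    have hsum : ∑ t ∈ Finset.range N, (ε : ℝ) * ((b (t+1) : ℝ) - (b t : ℝ)) =
        (ε : ℝ) * ((b N : ℝ) - (b 0 : ℝ)) := by
      rw [← Finset.mul_sum]
      congr 1
      exact Finset.sum_range_sub (fun t => ((b t : ℚ) : ℝ)) N
    rw [hsum]
    have : (0:ℝ) ≤ (ε:ℝ) := by exact_mod_cast hε.le
    have := hbB N
    nlinarith
  refine le_trans htsum ?_
  have heps : (ε : ℝ) = ((2:ℝ) ^ (k + K))⁻¹ := by
    rw [hedef]; unfold epsK; push_cast; norm_num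
  have hfin : (ε : ℝ) * (B - (b 0 : ℝ)) ≤ (2⁻¹ : ℝ) ^ k := by
    rw [heps, pow_add]
    have h2K : (0:ℝ) < 2 ^ K := by positivity
    have h2k : (0:ℝ) < 2 ^ k := by positivity
    have hB0 : B - (b 0 : ℝ) ≤ 2 ^ K := hK
    have hstep : ((2:ℝ) ^ k * 2 ^ K)⁻¹ * (B - (b 0:ℝ)) ≤ ((2:ℝ)^k * 2^K)⁻¹ * 2^K := by
      apply mul_le_mul_of_nonneg_left hB0
      positivity
    refine le_trans hstep ?_
    rw [inv_pow]
    rw [mul_inv, mul_assoc, inv_mul_cancel₀ (ne_of_gt h2K)]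
    simp
  refine le_trans (ENNReal.ofReal_le_ofReal hfin) ?_
  rw [ENNReal.ofReal_pow (by norm_num)]
  apply le_of_eq
  congr 1
  rw [ENNReal.ofReal_inv_of_pos (by norm_num)]
  norm_num

end RBaux

/-- Boundedness of relative convergence speed: if `A` is Martin-Löf random then
`(B - b n)/(A - a n)` is bounded above, i.e. `B - b n ≤ C (A - a n)` for some `C`. -/
theorem ratio_bounded_of_random (a b : ℕ → ℚ) (A B : ℝ)
    (ha : Computable a) (hb : Computable b) (hma : StrictMono a) (hmb : StrictMono b)
    (hA : Tendsto (fun n => (a n : ℝ)) atTop (nhds A))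
    (hB : Tendsto (fun n => (b n : ℝ)) atTop (nhds B))
    (hrand : MLRandom A) :
    ∃ C : ℝ, ∀ n, B - (b n : ℝ) ≤ C * (A - (a n : ℝ)) := by
  classical
  obtain ⟨K, hK⟩ : ∃ K : ℕ, B - (b 0 : ℝ) ≤ 2 ^ K := by
    obtain ⟨K, hK⟩ := pow_unbounded_of_one_lt (B - (b 0 : ℝ)) one_lt_two
    exact ⟨K, hK.le⟩
  have htest : MLTest (RBaux.WF a b K) :=
    ⟨RBaux.comp_WF ha hb K, fun k => RBaux.volume_WF a b hmb B hB K hK k⟩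
  obtain ⟨k, hk⟩ := hrand _ htest
  set ε := RBaux.epsK K k with hedef
  have hε : (0 : ℚ) < ε := by rw [hedef]; unfold RBaux.epsK; positivity
  have hεR : (0 : ℝ) < (ε : ℝ) := by exact_mod_cast hε
  set P := RBaux.pfun a b ε with hPdef
  set r := RBaux.rend a b ε with hrdef
  -- basic limit facts
  have haA : ∀ n, (a n : ℝ) < A := by
    intro n
    have h1 : ((a (n+1) : ℚ) : ℝ) ≤ A := by
      apply ge_of_tendsto hA
      filter_upwards [eventually_ge_atTop (n+1)] with m hm
      exact_mod_cast hma.monotone hm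
    have h2 : ((a n : ℚ) : ℝ) < ((a (n+1) : ℚ) : ℝ) := by
      exact_mod_cast hma (Nat.lt_succ_self n)
    linarith
  -- A is above every right endpoint
  have hAr : ∀ m, ((r m : ℚ) : ℝ) ≤ A := by
    intro m
    by_cases hm : P m = m
    · have : r m = a m := by
        rw [hrdef]; unfold RBaux.rend
        rw [← hPdef, hm]; ring
      rw [this]
      exact (haA m).le
    · have hnotin : A ∉ intervalOf (RBaux.WF a b K k m) := by
        intro hmem
        exact hk (Set.mem_iUnion.2 ⟨m, hmem⟩)
      have hW : RBaux.WF a b K k m =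
          some (a (P m), a (P m) + ε * (b m - b (P m))) := by
        unfold RBaux.WF
        rw [← hedef, ← hPdef, if_neg hm]
      rw [hW] at hnotin
      simp only [intervalOf, Set.mem_Ioo, not_and, not_lt] at hnotin
      have hlow : ((a (P m) : ℚ) : ℝ) < A := haA (P m)
      have := hnotin hlow
      have hre : ((a (P m) + ε * (b m - b (P m)) : ℚ) : ℝ) = ((r m : ℚ) : ℝ) := by
        rw [hrdef]; unfold RBaux.rend; rw [← hPdef]
      linarith [hre ▸ this]
  -- key inequality in the limit
  have hkey : ∀ n, (a n : ℝ) + (ε : ℝ) * (B - (b n : ℝ)) ≤ A := by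
    intro n
    have hseq : ∀ m, n ≤ m → (a n : ℝ) + (ε : ℝ) * ((b m : ℝ) - (b n : ℝ)) ≤ A := by
      intro m hm
      have hq := RBaux.rend_ge a b ε hm
      have hqR : ((a n : ℚ) : ℝ) + (ε : ℝ) * ((b m : ℝ) - (b n : ℝ)) ≤ ((r m : ℚ) : ℝ) := by
        rw [← hrdef] at hq
        exact_mod_cast hq
      linarith [hAr m]
    have hlim : Tendsto (fun m => (a n : ℝ) + (ε : ℝ) * ((b m : ℝ) - (b n : ℝ)))
        atTop (nhds ((a n : ℝ) + (ε : ℝ) * (B - (b n : ℝ)))) := by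
      exact Tendsto.const_add _ (Tendsto.const_mul _ (hB.sub_const _))
    apply le_of_tendsto hlim
    filter_upwards [eventually_ge_atTop n] with m hm
    exact hseq m hm
  refine ⟨(ε : ℝ)⁻¹, fun n => ?_⟩
  have h1 : (ε : ℝ) * (B - (b n : ℝ)) ≤ A - (a n : ℝ) := by linarith [hkey n]
  have h2 : (ε : ℝ)⁻¹ * ((ε : ℝ) * (B - (b n : ℝ))) ≤ (ε : ℝ)⁻¹ * (A - (a n : ℝ)) :=
    mul_le_mul_of_nonneg_left h1 (by positivity)
  rw [← mul_assoc, inv_mul_cancel₀ (ne_of_gt hεR), one_mul] at h2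
  exact h2
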